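/- Let $f: L^{\mathcal{R}} \to (-\infty, \infty]$ be proper, monotone, and convex, let $X \in \mathrm{dom}(f)$, and let $\ell = \mu \oplus \lambda \in \partial f(X)$ be a subgradient with regular part $\mu \in \mathbf{ca}_{\mathbb{P}}$ and singular part $\lambda$ (vanishing on $M^{\mathcal{R}}$). If there exists $s > 0$ such that $X + sX^+ \in \mathrm{dom}(f)$ and $f(X) = \lim_{n \to \infty} f(X + sX^+\mathbf{1}_{\{X^+ \ge n\}})$ (tail continuity at $X$ along $sX^+$), then $\lambda(X^+) = 0$ and hence $\int X\, d\mu \ge \ell(X)$. -/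
import Mathlib


/-!
Statement 18 (Proposition subgradproj3): If `f` is proper, monotone and convex
on `L^R`, `ℓ = μ ⊕ λ ∈ ∂f(X)`, and `f` is tail continuous at `X` along `sX⁺`
for some `s > 0`, then the singular part satisfies `λ(X⁺) = 0`, hence
`∫ X dμ ≥ ℓ(X)`.
-/

open MeasureTheory ENNReal

variable {Ω : Type*} [MeasurableSpace Ω]

/-- The Minkowski domain `L^R`. -/
def LRdom (D : Set (Measure Ω)) : Set (Ω → ℝ) :=
  {X | Measurable X ∧ ∀ μ ∈ D, Integrable X μ}

/-- Dominated convergence for truncations `min (Y ·) n`. -/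
lemma tendsto_integral_min_aux (ν : Measure Ω)
    (Y : Ω → ℝ) (hmeas : Measurable Y) (h0 : ∀ ω, 0 ≤ Y ω) (hint : Integrable Y ν) :
    Filter.Tendsto (fun n : ℕ => ∫ ω, min (Y ω) n ∂ν) Filter.atTop (nhds (∫ ω, Y ω ∂ν)) := by
  refine MeasureTheory.tendsto_integral_of_dominated_convergence Y
    (fun n => (hmeas.min measurable_const).aestronglyMeasurable) hint
    (fun n => Filter.Eventually.of_forall fun ω => ?_)
    (Filter.Eventually.of_forall fun ω => ?_)
  · rw [Real.norm_eq_abs, abs_of_nonneg (le_min (h0 ω) (Nat.cast_nonneg n))]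
    exact min_le_left _ _
  · have h : ∀ᶠ n : ℕ in Filter.atTop, min (Y ω) (n : ℝ) = Y ω := by
      filter_upwards [Filter.eventually_ge_atTop ⌈Y ω⌉₊] with n hn
      exact min_eq_left ((Nat.le_ceil _).trans (Nat.cast_le.2 hn))
    exact Filter.Tendsto.congr' (h.mono fun n hh => hh.symm) tendsto_const_nhds

/-- Dominated convergence for tails. -/
lemma tendsto_integral_tail_aux (ν : Measure Ω)
    (Y : Ω → ℝ) (hmeas : Measurable Y) (h0 : ∀ ω, 0 ≤ Y ω) (hint : Integrable Y ν) :
    Filter.Tendsto (fun n : ℕ => ∫ ω, Set.indicator {ω' | (n : ℝ) ≤ Y ω'} Y ω ∂ν)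
      Filter.atTop (nhds 0) := by
  have h := MeasureTheory.tendsto_integral_of_dominated_convergence
    (F := fun (n : ℕ) ω => Set.indicator {ω' | (n : ℝ) ≤ Y ω'} Y ω)
    (f := fun _ => (0 : ℝ)) (μ := ν) Y
    (fun n => (hmeas.indicator (measurableSet_le measurable_const hmeas)).aestronglyMeasurable)
    hint
    (fun n => Filter.Eventually.of_forall fun ω => ?_)
    (Filter.Eventually.of_forall fun ω => ?_)
  · simpa using h
  · show ‖Set.indicator {ω' | (n : ℝ) ≤ Y ω'} Y ω‖ ≤ Y ω
    by_cases hc : ω ∈ {ω' | (n : ℝ) ≤ Y ω'}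
    · rw [Set.indicator_of_mem hc, Real.norm_eq_abs, abs_of_nonneg (h0 ω)]
    · rw [Set.indicator_of_notMem hc]; simpa using h0 ω
  · have h : ∀ᶠ n : ℕ in Filter.atTop,
        Set.indicator {ω' | (n : ℝ) ≤ Y ω'} Y ω = 0 := by
      filter_upwards [Filter.eventually_ge_atTop (⌈Y ω⌉₊ + 1)] with n hn
      refine Set.indicator_of_notMem ?_ _
      simp only [Set.mem_setOf_eq, not_le]
      calc Y ω ≤ (⌈Y ω⌉₊ : ℝ) := Nat.le_ceil _
        _ < ((⌈Y ω⌉₊ + 1 : ℕ) : ℝ) := by exact_mod_cast Nat.lt_succ_self _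
        _ ≤ (n : ℝ) := Nat.cast_le.2 hn
    exact Filter.Tendsto.congr' (h.mono fun n hh => hh.symm) tendsto_const_nhds

theorem stmt18 (P : Measure Ω) [IsProbabilityMeasure P]
    (D : Set (Measure Ω)) (hD : D.Nonempty)
    (hDfin : ∀ μ ∈ D, IsFiniteMeasure μ) (hDac : ∀ μ ∈ D, μ ≪ P)
    -- f is proper, monotone and convex on L^R
    (f : (Ω → ℝ) → EReal)
    (hproper : ∀ Y, f Y ≠ ⊥)
    (hmono : ∀ Y ∈ LRdom D, ∀ Z ∈ LRdom D, (∀ ω, Y ω ≤ Z ω) → f Y ≤ f Z)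
    (hconv : ∀ Y ∈ LRdom D, ∀ Z ∈ LRdom D, ∀ t : ℝ, 0 ≤ t → t ≤ 1 →
      f (t • Y + (1 - t) • Z) ≤ (t : EReal) * f Y + ((1 - t : ℝ) : EReal) * f Z)
    -- X ∈ dom f
    (X : Ω → ℝ) (hX : X ∈ LRdom D) (hXdom : f X ≠ ⊤)
    -- ℓ = μ ⊕ λ is a subgradient of f at X, with regular part μ = ν₁ - ν₂
    (ℓ : (Ω → ℝ) → ℝ)
    (hadd : ∀ Y ∈ LRdom D, ∀ Z ∈ LRdom D, ℓ (Y + Z) = ℓ Y + ℓ Z)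
    (hsmul : ∀ Y ∈ LRdom D, ∀ c : ℝ, ℓ (c • Y) = c * ℓ Y)
    (ν₁ ν₂ : Measure Ω) (hν₁ : IsFiniteMeasure ν₁) (hν₂ : IsFiniteMeasure ν₂)
    (hν₁P : ν₁ ≪ P) (hν₂P : ν₂ ≪ P)
    (hint : ∀ Y ∈ LRdom D, Integrable Y ν₁ ∧ Integrable Y ν₂)
    -- the singular part λ = ℓ - ∫ · dμ vanishes on bounded measurable
    -- functions (hence on M^R)
    (hreg : ∀ Y : Ω → ℝ, Measurable Y → (∃ C : ℝ, ∀ ω, |Y ω| ≤ C) →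
      ℓ Y = ∫ ω, Y ω ∂ν₁ - ∫ ω, Y ω ∂ν₂)
    -- ℓ ∈ ∂f(X)
    (hsub : ∀ Y ∈ LRdom D, f X + ((ℓ (Y - X) : ℝ) : EReal) ≤ f Y)
    -- tail continuity at X along s X⁺ for some s > 0
    (htail : ∃ s : ℝ, 0 < s ∧
      f (fun ω => X ω + s * max (X ω) 0) ≠ ⊤ ∧
      Filter.Tendsto
        (fun n : ℕ => f (fun ω => X ω +
          s * Set.indicator {ω' | (n : ℝ) ≤ max (X ω') 0}
                (fun ω' => max (X ω') 0) ω))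
        Filter.atTop (nhds (f X))) :
    -- λ(X⁺) = 0, i.e. ℓ agrees with its regular part at X⁺, and ∫ X dμ ≥ ℓ(X)
    ℓ (fun ω => max (X ω) 0)
        = ∫ ω, max (X ω) 0 ∂ν₁ - ∫ ω, max (X ω) 0 ∂ν₂ ∧
    ℓ X ≤ ∫ ω, X ω ∂ν₁ - ∫ ω, X ω ∂ν₂ := by
  classical
  obtain ⟨s, hs, hfinS, htd⟩ := htail
  -- notation
  set Xp : Ω → ℝ := fun ω => max (X ω) 0 with hXpdef
  have hXp0 : ∀ ω, 0 ≤ Xp ω := fun ω => le_max_right _ _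
  have hXpmeas : Measurable Xp := hX.1.max measurable_const
  have hXpmem : Xp ∈ LRdom D := ⟨hXpmeas, fun μ hμ => (hX.2 μ hμ).pos_part⟩
  -- closure properties of LRdom
  have hmemadd : ∀ Y ∈ LRdom D, ∀ Z ∈ LRdom D, Y + Z ∈ LRdom D := fun Y hY Z hZ =>
    ⟨hY.1.add hZ.1, fun μ hμ => (hY.2 μ hμ).add (hZ.2 μ hμ)⟩
  have hmemsub : ∀ Y ∈ LRdom D, ∀ Z ∈ LRdom D, Y - Z ∈ LRdom D := fun Y hY Z hZ =>
    ⟨hY.1.sub hZ.1, fun μ hμ => (hY.2 μ hμ).sub (hZ.2 μ hμ)⟩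
  have hmemsmul : ∀ Y ∈ LRdom D, ∀ c : ℝ, c • Y ∈ LRdom D := fun Y hY c =>
    ⟨hY.1.const_smul c, fun μ hμ => (hY.2 μ hμ).smul c⟩
  -- ℓ of differences
  have hlsub : ∀ Y ∈ LRdom D, ∀ Z ∈ LRdom D, ℓ (Y - Z) = ℓ Y - ℓ Z := by
    intro Y hY Z hZ
    have h1 : ℓ ((Y - Z) + Z) = ℓ (Y - Z) + ℓ Z := hadd _ (hmemsub Y hY Z hZ) _ hZ
    rw [sub_add_cancel] at h1
    linarith
  -- f X is finite
  set r : ℝ := (f X).toReal with hrdef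
  have hr : f X = (r : EReal) := (EReal.coe_toReal hXdom (hproper X)).symm
  -- positivity of ℓ
  have hpos : ∀ Z ∈ LRdom D, (∀ ω, 0 ≤ Z ω) → 0 ≤ ℓ Z := by
    intro Z hZ hZ0
    have hXZ : X - Z ∈ LRdom D := hmemsub X hX Z hZ
    have h2 : f (X - Z) ≤ f X := hmono _ hXZ _ hX fun ω => by
      simp only [Pi.sub_apply]; linarith [hZ0 ω]
    have h1 := (hsub (X - Z) hXZ).trans h2
    have hval : (X - Z) - X = (-1 : ℝ) • Z := by
      funext ω; simp only [Pi.sub_apply, Pi.smul_apply, smul_eq_mul]; ring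
    rw [hval, hsmul Z hZ, hr, ← EReal.coe_add, EReal.coe_le_coe_iff] at h1
    linarith
  -- the singular part is nonnegative on nonnegative elements
  have hlam : ∀ Y ∈ LRdom D, (∀ ω, 0 ≤ Y ω) →
      ∫ ω, Y ω ∂ν₁ - ∫ ω, Y ω ∂ν₂ ≤ ℓ Y := by
    intro Y hY hY0
    have hYmeas := hY.1
    have hmin : ∀ n : ℕ, (fun ω => min (Y ω) n) ∈ LRdom D := by
      intro n
      refine ⟨hYmeas.min measurable_const, fun μ hμ => ?_⟩
      refine (hY.2 μ hμ).mono (hYmeas.min measurable_const).aestronglyMeasurable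
        (Filter.Eventually.of_forall fun ω => ?_)
      rw [Real.norm_eq_abs, Real.norm_eq_abs,
        abs_of_nonneg (le_min (hY0 ω) (Nat.cast_nonneg n)), abs_of_nonneg (hY0 ω)]
      exact min_le_left _ _
    have hle : ∀ n : ℕ, ∫ ω, min (Y ω) n ∂ν₁ - ∫ ω, min (Y ω) n ∂ν₂ ≤ ℓ Y := by
      intro n
      have h1 : ℓ (fun ω => min (Y ω) n) =
          ∫ ω, min (Y ω) n ∂ν₁ - ∫ ω, min (Y ω) n ∂ν₂ :=
        hreg _ (hYmeas.min measurable_const)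
          ⟨n, fun ω => by
            rw [abs_of_nonneg (le_min (hY0 ω) (Nat.cast_nonneg n))]
            exact min_le_right _ _⟩
      have h2 : 0 ≤ ℓ (Y - fun ω => min (Y ω) n) :=
        hpos _ (hmemsub Y hY _ (hmin n)) fun ω => by
          simp only [Pi.sub_apply]; exact sub_nonneg.2 (min_le_left _ _)
      have h3 := hlsub Y hY _ (hmin n)
      rw [h3] at h2
      linarith
    have htend := (tendsto_integral_min_aux ν₁ Y hYmeas hY0 (hint Y hY).1).sub
      (tendsto_integral_min_aux ν₂ Y hYmeas hY0 (hint Y hY).2)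
    exact le_of_tendsto htend (Filter.Eventually.of_forall hle)
  -- the tail functions
  set g : ℕ → Ω → ℝ := fun n => Set.indicator {ω' | (n : ℝ) ≤ Xp ω'} Xp with hgdef
  have hSmeas : ∀ n : ℕ, MeasurableSet {ω' | (n : ℝ) ≤ Xp ω'} := fun n =>
    measurableSet_le measurable_const hXpmeas
  have hgmeas : ∀ n, Measurable (g n) := fun n => hXpmeas.indicator (hSmeas n)
  have hg0 : ∀ n ω, 0 ≤ g n ω := fun n ω => by
    show 0 ≤ Set.indicator {ω' | (n : ℝ) ≤ Xp ω'} Xp ω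
    by_cases hc : ω ∈ {ω' | (n : ℝ) ≤ Xp ω'}
    · rw [Set.indicator_of_mem hc]; exact hXp0 ω
    · rw [Set.indicator_of_notMem hc]
  have hgle : ∀ n ω, g n ω ≤ Xp ω := fun n ω => by
    show Set.indicator {ω' | (n : ℝ) ≤ Xp ω'} Xp ω ≤ Xp ω
    by_cases hc : ω ∈ {ω' | (n : ℝ) ≤ Xp ω'}
    · rw [Set.indicator_of_mem hc]
    · rw [Set.indicator_of_notMem hc]; exact hXp0 ω
  have hgmem : ∀ n, g n ∈ LRdom D := fun n =>
    ⟨hgmeas n, fun μ hμ => ((hX.2 μ hμ).pos_part).indicator (hSmeas n)⟩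
  -- ℓ (Xp - g n) is given by the regular part
  have hregn : ∀ n : ℕ, ℓ (Xp - g n) =
      ∫ ω, (Xp - g n) ω ∂ν₁ - ∫ ω, (Xp - g n) ω ∂ν₂ := by
    intro n
    refine hreg _ (hXpmeas.sub (hgmeas n)) ⟨n, fun ω => ?_⟩
    show |Xp ω - Set.indicator {ω' | (n : ℝ) ≤ Xp ω'} Xp ω| ≤ (n : ℝ)
    by_cases hc : ω ∈ {ω' | (n : ℝ) ≤ Xp ω'}
    · rw [Set.indicator_of_mem hc]
      simp
    · rw [Set.indicator_of_notMem hc, sub_zero, abs_of_nonneg (hXp0 ω)]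
      exact le_of_lt (not_le.1 hc)
  -- key identity: the singular part at Xp equals the singular part at g n
  have key : ∀ n : ℕ,
      ℓ Xp - (∫ ω, Xp ω ∂ν₁ - ∫ ω, Xp ω ∂ν₂) =
      ℓ (g n) - (∫ ω, g n ω ∂ν₁ - ∫ ω, g n ω ∂ν₂) := by
    intro n
    have h1 := hlsub Xp hXpmem (g n) (hgmem n)
    have h2 := hregn n
    have h3 : ∫ ω, (Xp - g n) ω ∂ν₁ = ∫ ω, Xp ω ∂ν₁ - ∫ ω, g n ω ∂ν₁ := by
      simp only [Pi.sub_apply]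
      exact integral_sub (hint Xp hXpmem).1 (hint (g n) (hgmem n)).1
    have h4 : ∫ ω, (Xp - g n) ω ∂ν₂ = ∫ ω, Xp ω ∂ν₂ - ∫ ω, g n ω ∂ν₂ := by
      simp only [Pi.sub_apply]
      exact integral_sub (hint Xp hXpmem).2 (hint (g n) (hgmem n)).2
    rw [h1, h3, h4] at h2
    linarith
  -- upper bound on ℓ (g n) from the subgradient inequality
  have hYmem : ∀ n, X + s • g n ∈ LRdom D := fun n =>
    hmemadd X hX _ (hmemsmul _ (hgmem n) s)
  have hXsXpmem : X + s • Xp ∈ LRdom D := hmemadd X hX _ (hmemsmul _ hXpmem s)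
  have hfinS' : f (X + s • Xp) ≠ ⊤ := by
    have heq : (fun ω => X ω + s * max (X ω) 0) = X + s • Xp := by
      funext ω; simp [hXpdef]
    rwa [heq] at hfinS
  have htd' : Filter.Tendsto (fun n : ℕ => f (X + s • g n)) Filter.atTop (nhds (f X)) := by
    have heq : ∀ n : ℕ, (fun ω => X ω +
        s * Set.indicator {ω' | (n : ℝ) ≤ max (X ω') 0}
          (fun ω' => max (X ω') 0) ω) = X + s • g n := by
      intro n; funext ω; simp [hgdef, hXpdef]
    refine htd.congr fun n => ?_
    rw [heq n]
  have hfinYn : ∀ n, f (X + s • g n) ≠ ⊤ := by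
    intro n
    refine ne_top_of_le_ne_top hfinS' (hmono _ (hYmem n) _ hXsXpmem fun ω => ?_)
    simp only [Pi.add_apply, Pi.smul_apply, smul_eq_mul]
    have h := hgle n ω
    nlinarith
  have hub : ∀ n, ℓ (g n) ≤ ((f (X + s • g n)).toReal - r) / s := by
    intro n
    have h1 := hsub _ (hYmem n)
    have h2 : (X + s • g n) - X = s • g n := add_sub_cancel_left X _
    have ht : f (X + s • g n) = (((f (X + s • g n)).toReal : ℝ) : EReal) :=
      (EReal.coe_toReal (hfinYn n) (hproper _)).symm
    rw [h2, hsmul _ (hgmem n) s, hr, ht, ← EReal.coe_add, EReal.coe_le_coe_iff] at h1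
    rw [le_div_iff₀ hs]
    linarith
  -- squeeze: ℓ (g n) → 0
  have htt : Filter.Tendsto (fun n : ℕ => (f (X + s • g n)).toReal)
      Filter.atTop (nhds r) := (EReal.tendsto_toReal hXdom (hproper X)).comp htd'
  have hupperlim : Filter.Tendsto (fun n : ℕ => ((f (X + s • g n)).toReal - r) / s)
      Filter.atTop (nhds 0) := by
    have := (htt.sub_const r).div_const s
    simpa using this
  have hlowlim : Filter.Tendsto (fun n : ℕ => ∫ ω, g n ω ∂ν₁ - ∫ ω, g n ω ∂ν₂)
      Filter.atTop (nhds 0) := by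
    have h1 := tendsto_integral_tail_aux ν₁ Xp hXpmeas hXp0 (hint Xp hXpmem).1
    have h2 := tendsto_integral_tail_aux ν₂ Xp hXpmeas hXp0 (hint Xp hXpmem).2
    simpa [hgdef] using h1.sub h2
  have hgtend : Filter.Tendsto (fun n : ℕ => ℓ (g n)) Filter.atTop (nhds 0) :=
    tendsto_of_tendsto_of_tendsto_of_le_of_le hlowlim hupperlim
      (fun n => hlam _ (hgmem n) (hg0 n)) hub
  have hdiff : Filter.Tendsto
      (fun n : ℕ => ℓ (g n) - (∫ ω, g n ω ∂ν₁ - ∫ ω, g n ω ∂ν₂))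
      Filter.atTop (nhds 0) := by simpa using hgtend.sub hlowlim
  have hzero : ℓ Xp - (∫ ω, Xp ω ∂ν₁ - ∫ ω, Xp ω ∂ν₂) = 0 := by
    refine tendsto_nhds_unique (f := fun _ : ℕ =>
      ℓ Xp - (∫ ω, Xp ω ∂ν₁ - ∫ ω, Xp ω ∂ν₂)) (l := Filter.atTop)
      tendsto_const_nhds ?_
    exact hdiff.congr fun n => (key n).symm
  -- first conclusion
  have hconc1 : ℓ Xp = ∫ ω, Xp ω ∂ν₁ - ∫ ω, Xp ω ∂ν₂ := by linarith
  refine ⟨hconc1, ?_⟩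
  -- second conclusion
  set Xm : Ω → ℝ := fun ω => max (-X ω) 0 with hXmdef
  have hXm0 : ∀ ω, 0 ≤ Xm ω := fun ω => le_max_right _ _
  have hXmmem : Xm ∈ LRdom D := ⟨hX.1.neg.max measurable_const,
    fun μ hμ => (hX.2 μ hμ).neg.pos_part⟩
  have hXeq : Xp - Xm = X := by
    funext ω
    simp only [Pi.sub_apply, hXpdef, hXmdef]
    rcases le_total 0 (X ω) with h | h
    · rw [max_eq_left h, max_eq_right (neg_nonpos.2 h), sub_zero]
    · rw [max_eq_right h, max_eq_left (neg_nonneg.2 h)]; ring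
  have h1 : ℓ X = ℓ Xp - ℓ Xm := by rw [← hXeq]; exact hlsub Xp hXpmem Xm hXmmem
  have h2 : ∫ ω, X ω ∂ν₁ = ∫ ω, Xp ω ∂ν₁ - ∫ ω, Xm ω ∂ν₁ := by
    rw [← hXeq]
    simp only [Pi.sub_apply]
    exact integral_sub (hint Xp hXpmem).1 (hint Xm hXmmem).1
  have h3 : ∫ ω, X ω ∂ν₂ = ∫ ω, Xp ω ∂ν₂ - ∫ ω, Xm ω ∂ν₂ := by
    rw [← hXeq]
    simp only [Pi.sub_apply]
    exact integral_sub (hint Xp hXpmem).2 (hint Xm hXmmem).2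
  have h4 := hlam Xm hXmmem hXm0
  rw [h1, h2, h3]
  linarith
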